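/- Let M be an MDP in reachability form with state set S ∪ F (F absorbing), enabled pairs E, matrices A ∈ ℝ^{E×S} with A((s,a),s') = [s=s'] − P(s,a,s') and T ∈ ℝ^{E×k} with T((s,a),i) = Σ_{s'∈G_i} P(s,a,s') for target sets G_1,…,G_k ⊆ F. Then there exists a scheduler σ with Pr^σ(◇G_i) ≥ λ_i for all i ∈ [k] if and only if there exists y ∈ ℝ^E with y ≥ 0, Aᵀ y ≤ δ_in, and Tᵀ y ≥ λ, where δ_in is the Dirac initial distribution. -/
import Mathlib


open Finset

structure MDP (S A : Type) [Fintype S] [Fintype A] where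
  init : S
  trans : S → A → Option (S → ℝ)
  nonneg' : ∀ s a f, trans s a = some f → ∀ t, 0 ≤ f t
  sum_one' : ∀ s a f, trans s a = some f → ∑ t, f t = 1
  exists_enabled : ∀ s, ∃ a, (trans s a).isSome

namespace MDP

variable {S A : Type} [Fintype S] [Fintype A]

/-- action `a` is enabled in state `s`. -/
def enabled (M : MDP S A) (s : S) (a : A) : Prop := (M.trans s a).isSome

/-- transition probability (0 if the action is not enabled). -/
noncomputable def prob (M : MDP S A) (s : S) (a : A) (t : S) : ℝ :=
  ((M.trans s a).getD 0) t

/-- A (history-dependent, randomized) scheduler. -/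
structure Scheduler (M : MDP S A) where
  choice : List (S × A) → S → A → ℝ
  choice_nonneg : ∀ h s a, 0 ≤ choice h s a
  choice_sum_one : ∀ h s, ∑ a, choice h s a = 1
  choice_support : ∀ h s a, choice h s a ≠ 0 → M.enabled s a

variable [DecidableEq S]

/-- probability of reaching `G` within `n` steps, from history `h` and current state `s`. -/
noncomputable def reachAux (M : MDP S A) (σ : Scheduler M) (G : Finset S) :
    ℕ → List (S × A) → S → ℝ
  | 0, _, s => if s ∈ G then 1 else 0
  | n + 1, h, s =>
      if s ∈ G then 1
      else ∑ a : A, σ.choice h s a * ∑ t : S, M.prob s a t * reachAux M σ G n (h ++ [(s, a)]) t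

/-- probability of eventually reaching `G`, starting in `s`. -/
noncomputable def prReachFrom (M : MDP S A) (σ : Scheduler M) (G : Finset S) (s : S) : ℝ :=
  ⨆ n : ℕ, reachAux M σ G n [] s

/-- probability of eventually reaching `G` from the initial state. -/
noncomputable def prReach (M : MDP S A) (σ : Scheduler M) (G : Finset S) : ℝ :=
  prReachFrom M σ G M.init

/-- probability of staying in `G` for the first `n` steps. -/
noncomputable def invAux (M : MDP S A) (σ : Scheduler M) (G : Finset S) :
    ℕ → List (S × A) → S → ℝ
  | 0, _, s => if s ∈ G then 1 else 0
  | n + 1, h, s =>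
      if s ∈ G then
        ∑ a : A, σ.choice h s a * ∑ t : S, M.prob s a t * invAux M σ G n (h ++ [(s, a)]) t
      else 0

/-- probability of always remaining in `G`, from the initial state. -/
noncomputable def prInv (M : MDP S A) (σ : Scheduler M) (G : Finset S) : ℝ :=
  ⨅ n : ℕ, invAux M σ G n [] M.init

/-- expected total reward collected in the first `n` steps. -/
noncomputable def expTotal (M : MDP S A) (σ : Scheduler M) (r : S → A → ℝ) :
    ℕ → List (S × A) → S → ℝ
  | 0, _, _ => 0
  | n + 1, h, s =>
      ∑ a : A, σ.choice h s a *
        (r s a + ∑ t : S, M.prob s a t * expTotal M σ r n (h ++ [(s, a)]) t)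

/-- expected (liminf) mean payoff under scheduler `σ`. -/
noncomputable def expMPinf (M : MDP S A) (σ : Scheduler M) (r : S → A → ℝ) : ℝ :=
  Filter.liminf (fun n : ℕ => expTotal M σ r n [] M.init / n) Filter.atTop

/-- expected (limsup) mean payoff under scheduler `σ`. -/
noncomputable def expMPsup (M : MDP S A) (σ : Scheduler M) (r : S → A → ℝ) : ℝ :=
  Filter.limsup (fun n : ℕ => expTotal M σ r n [] M.init / n) Filter.atTop

/-- `M'` (with fresh sink `⊥ = none`) is a subsystem of `M` with state set `S' ∪ {⊥}`. -/
def IsSubsystem (M : MDP S A) (S' : Finset S) (M' : MDP (Option S) A) : Prop :=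
  M.init ∈ S' ∧ M'.init = some M.init ∧
  (∀ a, M'.enabled none a → ∀ t, M'.prob none a t = if t = none then 1 else 0) ∧
  (∀ s ∈ S', ∀ a, (M'.enabled (some s) a ↔ M.enabled s a)) ∧
  (∀ s ∈ S', ∀ t ∈ S', ∀ a,
    M'.prob (some s) a (some t) = M.prob s a t ∨ M'.prob (some s) a (some t) = 0) ∧
  (∀ s ∈ S', ∀ t, t ∉ S' → ∀ a, M'.prob (some s) a (some t) = 0)

/-- `M'` is the subsystem of `M` induced by `S'`: transitions leaving `S'` are
redirected to the absorbing sink `⊥ = none`. -/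
def IsInducedSubsystem (M : MDP S A) (S' : Finset S) (M' : MDP (Option S) A) : Prop :=
  M.init ∈ S' ∧ M'.init = some M.init ∧
  (∀ a, M'.enabled none a → ∀ t, M'.prob none a t = if t = none then 1 else 0) ∧
  (∀ s ∈ S', ∀ a, (M'.enabled (some s) a ↔ M.enabled s a)) ∧
  (∀ s ∈ S', ∀ t ∈ S', ∀ a, M'.prob (some s) a (some t) = M.prob s a t) ∧
  (∀ s ∈ S', ∀ t, t ∉ S' → ∀ a, M'.prob (some s) a (some t) = 0) ∧
  (∀ s ∈ S', ∀ a, M.enabled s a → M'.prob (some s) a none = ∑ t ∈ S'ᶜ, M.prob s a t)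

/-- `C` is an end component of `M`. -/
def IsEC (M : MDP S A) (C : Finset (S × A)) : Prop :=
  C.Nonempty ∧ (∀ p ∈ C, M.enabled p.1 p.2) ∧
  (∀ p ∈ C, ∀ t, 0 < M.prob p.1 p.2 t → t ∈ C.image Prod.fst) ∧
  (∀ s ∈ C.image Prod.fst, ∀ t ∈ C.image Prod.fst,
    Relation.ReflTransGen (fun u v => ∃ a, (u, a) ∈ C ∧ 0 < M.prob u a v) s t)

end MDP

/-- positive boolean combinations of lower-bounded reachability and invariance
predicates; the flag `strict` distinguishes `>` from `≥`. -/
inductive MOProp (S : Type) where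
  | reach (G : Finset S) (lam : ℝ) (strict : Bool)
  | invar (G : Finset S) (lam : ℝ) (strict : Bool)
  | conj (p q : MOProp S)
  | disj (p q : MOProp S)

namespace MDP

variable {S A : Type} [Fintype S] [Fintype A] [DecidableEq S]

/-- satisfaction of a multi-objective property in `M` under `σ`. -/
def Sat (M : MDP S A) (σ : Scheduler M) : MOProp S → Prop
  | .reach G lam strict => if strict then lam < prReach M σ G else lam ≤ prReach M σ G
  | .invar G lam strict => if strict then lam < prInv M σ G else lam ≤ prInv M σ G
  | .conj p q => Sat M σ p ∧ Sat M σ q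
  | .disj p q => Sat M σ p ∨ Sat M σ q

/-- satisfaction of a multi-objective property (over the original state space) in a
subsystem `M'` with sink `⊥ = none`. -/
def SatSub (M' : MDP (Option S) A) (σ : Scheduler M') : MOProp S → Prop
  | .reach G lam strict =>
      if strict then lam < prReach M' σ (G.image some) else lam ≤ prReach M' σ (G.image some)
  | .invar G lam strict =>
      if strict then lam < prInv M' σ (G.image some) else lam ≤ prInv M' σ (G.image some)
  | .conj p q => SatSub M' σ p ∧ SatSub M' σ q
  | .disj p q => SatSub M' σ p ∨ SatSub M' σ q

end MDP

set_option linter.unusedSectionVars false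
namespace MDP

variable {S A : Type} [Fintype S] [Fintype A] [DecidableEq S]

lemma prob_nonneg (M : MDP S A) (s : S) (a : A) (t : S) : 0 ≤ M.prob s a t := by
  unfold prob
  cases h : M.trans s a with
  | none => simp
  | some f => simpa using M.nonneg' s a f h t

lemma sum_prob_le_one (M : MDP S A) (s : S) (a : A) : ∑ t, M.prob s a t ≤ 1 := by
  unfold prob
  cases h : M.trans s a with
  | none => simp
  | some f => simp [M.sum_one' s a f h]

lemma sum_prob_eq_one (M : MDP S A) {s : S} {a : A} (ha : M.enabled s a) :
    ∑ t, M.prob s a t = 1 := by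
  unfold enabled at ha
  unfold prob
  cases h : M.trans s a with
  | none => rw [h] at ha; simp at ha
  | some f => simp [M.sum_one' s a f h]

lemma prob_not_enabled (M : MDP S A) {s : S} {a : A} (ha : ¬ M.enabled s a) (t : S) :
    M.prob s a t = 0 := by
  unfold enabled at ha
  unfold prob
  cases h : M.trans s a with
  | none => simp
  | some f => rw [h] at ha; simp at ha

lemma reachAux_nonneg (M : MDP S A) (σ : Scheduler M) (G : Finset S) :
    ∀ n h s, 0 ≤ reachAux M σ G n h s := by
  intro n
  induction n with
  | zero => intro h s; unfold reachAux; positivity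
  | succ n ih =>
    intro h s
    unfold reachAux
    split
    · norm_num
    · refine Finset.sum_nonneg fun a _ => mul_nonneg (σ.choice_nonneg h s a) ?_
      exact Finset.sum_nonneg fun t _ => mul_nonneg (M.prob_nonneg s a t) (ih _ t)

lemma reachAux_le_one (M : MDP S A) (σ : Scheduler M) (G : Finset S) :
    ∀ n h s, reachAux M σ G n h s ≤ 1 := by
  intro n
  induction n with
  | zero => intro h s; unfold reachAux; split <;> norm_num
  | succ n ih =>
    intro h s
    unfold reachAux
    split
    · exact le_rfl
    · calc ∑ a, σ.choice h s a * ∑ t, M.prob s a t * reachAux M σ G n (h ++ [(s, a)]) t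
          ≤ ∑ a, σ.choice h s a * 1 := by
            refine Finset.sum_le_sum fun a _ => ?_
            refine mul_le_mul_of_nonneg_left ?_ (σ.choice_nonneg h s a)
            calc ∑ t, M.prob s a t * reachAux M σ G n (h ++ [(s, a)]) t
                ≤ ∑ t, M.prob s a t * 1 := Finset.sum_le_sum fun t _ =>
                  mul_le_mul_of_nonneg_left (ih _ t) (M.prob_nonneg s a t)
              _ ≤ 1 := by simpa using M.sum_prob_le_one s a
        _ = 1 := by simpa using σ.choice_sum_one h s

lemma reachAux_succ_le (M : MDP S A) (σ : Scheduler M) (G : Finset S) :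
    ∀ n h s, reachAux M σ G n h s ≤ reachAux M σ G (n + 1) h s := by
  intro n
  induction n with
  | zero =>
    intro h s
    by_cases hs : s ∈ G
    · simp [reachAux, hs]
    · simp only [reachAux, hs, if_false]
      refine Finset.sum_nonneg fun a _ => mul_nonneg (σ.choice_nonneg h s a) ?_
      exact Finset.sum_nonneg fun t _ =>
        mul_nonneg (M.prob_nonneg s a t) (reachAux_nonneg M σ G 0 (h ++ [(s,a)]) t)
  | succ n ih =>
    intro h s
    by_cases hs : s ∈ G
    · simp [reachAux, hs]
    · simp only [reachAux, hs, if_false]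
      refine Finset.sum_le_sum fun a _ => mul_le_mul_of_nonneg_left ?_ (σ.choice_nonneg h s a)
      exact Finset.sum_le_sum fun t _ =>
        mul_le_mul_of_nonneg_left (ih _ t) (M.prob_nonneg s a t)

lemma reachAux_mem (M : MDP S A) (σ : Scheduler M) (G : Finset S) (n : ℕ) (h : List (S × A))
    {s : S} (hs : s ∈ G) : reachAux M σ G n h s = 1 := by
  cases n <;> simp [reachAux, hs]

lemma prob_absorbing (M : MDP S A) {F : Finset S}
    (habs : ∀ s ∈ F, ∀ a, M.enabled s a → M.prob s a s = 1)
    {s : S} (hs : s ∈ F) {a : A} (ha : M.enabled s a) {t : S} (ht : t ≠ s) :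
    M.prob s a t = 0 := by
  have h1 : ∑ u ∈ Finset.univ.erase s, M.prob s a u = 0 := by
    have := M.sum_prob_eq_one ha
    have h2 : ∑ u, M.prob s a u = M.prob s a s + ∑ u ∈ Finset.univ.erase s, M.prob s a u := by
      rw [← Finset.add_sum_erase _ _ (Finset.mem_univ s)]
    rw [this, habs s hs a ha] at h2
    linarith
  have := (Finset.sum_eq_zero_iff_of_nonneg (fun u _ => M.prob_nonneg s a u)).mp h1
  exact this t (Finset.mem_erase.mpr ⟨ht, Finset.mem_univ t⟩)

lemma reachAux_absorbing (M : MDP S A) (σ : Scheduler M) {F : Finset S} {G : Finset S}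
    (habs : ∀ s ∈ F, ∀ a, M.enabled s a → M.prob s a s = 1)
    {s : S} (hsF : s ∈ F) (hsG : s ∉ G) :
    ∀ n h, reachAux M σ G n h s = 0 := by
  intro n
  induction n with
  | zero => intro h; simp [reachAux, hsG]
  | succ n ih =>
    intro h
    simp only [reachAux, hsG, if_false]
    refine Finset.sum_eq_zero fun a _ => ?_
    by_cases ha : σ.choice h s a = 0
    · simp [ha]
    · have hen : M.enabled s a := σ.choice_support h s a ha
      have hsum : ∑ t, M.prob s a t * reachAux M σ G n (h ++ [(s, a)]) t = 0 := by
        rw [Finset.sum_eq_single s]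
        · rw [habs s hsF a hen, ih]; ring
        · intro t _ ht; rw [prob_absorbing M habs hsF hen ht]; ring
        · intro ht; exact absurd (Finset.mem_univ s) ht
      rw [hsum]; ring

end MDP

namespace MDP

variable {S A : Type} [Fintype S] [Fintype A] [DecidableEq S]

lemma reachAux_monotone (M : MDP S A) (σ : Scheduler M) (G : Finset S) (h : List (S × A))
    (s : S) : Monotone fun n => reachAux M σ G n h s :=
  monotone_nat_of_le_succ fun n => reachAux_succ_le M σ G n h s

lemma reachAux_bddAbove (M : MDP S A) (σ : Scheduler M) (G : Finset S) (h : List (S × A))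
    (s : S) : BddAbove (Set.range fun n => reachAux M σ G n h s) := by
  refine ⟨1, ?_⟩
  rintro x ⟨n, rfl⟩
  exact reachAux_le_one M σ G n h s

lemma tendsto_reachAux (M : MDP S A) (σ : Scheduler M) (G : Finset S) (s : S) :
    Filter.Tendsto (fun n => reachAux M σ G n [] s) Filter.atTop
      (nhds (prReachFrom M σ G s)) :=
  tendsto_atTop_ciSup (reachAux_monotone M σ G [] s) (reachAux_bddAbove M σ G [] s)

lemma prReachFrom_nonneg (M : MDP S A) (σ : Scheduler M) (G : Finset S) (s : S) :
    0 ≤ prReachFrom M σ G s :=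
  le_ciSup_of_le (reachAux_bddAbove M σ G [] s) 0 (reachAux_nonneg M σ G 0 [] s)

lemma prReachFrom_le_one (M : MDP S A) (σ : Scheduler M) (G : Finset S) (s : S) :
    prReachFrom M σ G s ≤ 1 :=
  ciSup_le fun n => reachAux_le_one M σ G n [] s

lemma prReachFrom_mem (M : MDP S A) (σ : Scheduler M) {G : Finset S} {s : S} (hs : s ∈ G) :
    prReachFrom M σ G s = 1 := by
  unfold prReachFrom
  have : ∀ n : ℕ, reachAux M σ G n [] s = 1 := fun n => reachAux_mem M σ G n [] hs
  simp [this]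

lemma prReachFrom_absorbing (M : MDP S A) (σ : Scheduler M) {F G : Finset S}
    (habs : ∀ s ∈ F, ∀ a, M.enabled s a → M.prob s a s = 1)
    {s : S} (hsF : s ∈ F) (hsG : s ∉ G) : prReachFrom M σ G s = 0 := by
  unfold prReachFrom
  have : ∀ n : ℕ, reachAux M σ G n [] s = 0 := fun n => reachAux_absorbing M σ habs hsF hsG n []
  simp [this]

/-- history-irrelevance for memoryless schedulers -/
lemma reachAux_hist (M : MDP S A) (σ : Scheduler M)
    (hm : ∀ h h' s a, σ.choice h s a = σ.choice h' s a) (G : Finset S) :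
    ∀ n h h' s, reachAux M σ G n h s = reachAux M σ G n h' s := by
  intro n
  induction n with
  | zero => intro h h' s; rfl
  | succ n ih =>
    intro h h' s
    simp only [reachAux]
    split
    · rfl
    · refine Finset.sum_congr rfl fun a _ => ?_
      rw [hm h h' s a]
      refine congrArg _ (Finset.sum_congr rfl fun t _ => ?_)
      rw [ih (h ++ [(s, a)]) (h' ++ [(s, a)]) t]

/-- fixed-point equation for memoryless schedulers at non-target states -/
lemma prReachFrom_fix (M : MDP S A) (σ : Scheduler M)
    (hm : ∀ h h' s a, σ.choice h s a = σ.choice h' s a) (G : Finset S)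
    {s : S} (hs : s ∉ G) :
    prReachFrom M σ G s =
      ∑ a, σ.choice [] s a * ∑ t, M.prob s a t * prReachFrom M σ G t := by
  have h1 : Filter.Tendsto (fun n => reachAux M σ G (n + 1) [] s) Filter.atTop
      (nhds (prReachFrom M σ G s)) :=
    (tendsto_reachAux M σ G s).comp (Filter.tendsto_add_atTop_nat 1)
  have h2 : (fun n => reachAux M σ G (n + 1) [] s) =
      fun n => ∑ a, σ.choice [] s a * ∑ t, M.prob s a t * reachAux M σ G n [] t := by
    funext n
    simp only [reachAux, hs, if_false]
    refine Finset.sum_congr rfl fun a _ => ?_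
    refine congrArg _ (Finset.sum_congr rfl fun t _ => ?_)
    rw [reachAux_hist M σ hm G n ([] ++ [(s, a)]) [] t]
  rw [h2] at h1
  have h3 : Filter.Tendsto
      (fun n => ∑ a, σ.choice [] s a * ∑ t, M.prob s a t * reachAux M σ G n [] t)
      Filter.atTop
      (nhds (∑ a, σ.choice [] s a * ∑ t, M.prob s a t * prReachFrom M σ G t)) := by
    refine tendsto_finset_sum _ fun a _ => Filter.Tendsto.const_mul _ ?_
    exact tendsto_finset_sum _ fun t _ => Filter.Tendsto.const_mul _ (tendsto_reachAux M σ G t)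
  exact tendsto_nhds_unique h1 h3

end MDP

section Farkas

variable {β : Type} [Fintype β]

/-- dot product on `β → ℝ` -/
def fdot (x y : β → ℝ) : ℝ := ∑ i, x i * y i

lemma fdot_sub_smul_right (x y z : β → ℝ) (c : ℝ) :
    fdot x (y - c • z) = fdot x y - c * fdot x z := by
  simp [fdot, mul_sub, Finset.sum_sub_distrib, Finset.mul_sum, mul_left_comm]

lemma fdot_sub_smul_left (x z w : β → ℝ) (c : ℝ) :
    fdot (x - c • z) w = fdot x w - c * fdot z w := by
  simp [fdot, sub_mul, Finset.sum_sub_distrib, Finset.mul_sum, mul_assoc]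

lemma fdot_neg_self {b : β → ℝ} (hb : b ≠ 0) : fdot b (-b) < 0 := by
  obtain ⟨i, hi⟩ : ∃ i, b i ≠ 0 := by
    by_contra hc
    push_neg at hc
    exact hb (funext hc)
  have h : 0 < fdot b b :=
    Finset.sum_pos' (fun j _ => mul_self_nonneg (b j))
      ⟨i, Finset.mem_univ i, mul_self_pos.mpr hi⟩
  have h2 : fdot b (-b) = -fdot b b := by simp [fdot]
  linarith

theorem farkas {ι : Type} [DecidableEq ι] (t : Finset ι) (v : ι → β → ℝ) (b : β → ℝ) :
    (∃ lam : ι → ℝ, (∀ i, 0 ≤ lam i) ∧ ∑ i ∈ t, lam i • v i = b) ∨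
    (∃ w : β → ℝ, (∀ i ∈ t, 0 ≤ fdot (v i) w) ∧ fdot b w < 0) := by
  induction t using Finset.induction_on generalizing v b with
  | empty =>
    by_cases hb : b = 0
    · exact Or.inl ⟨0, fun i => le_rfl, by simp [hb]⟩
    · exact Or.inr ⟨-b, by simp, fdot_neg_self hb⟩
  | @insert a s ha ih =>
    rcases ih v b with ⟨lam, hl, he⟩ | ⟨y, hy, hby⟩
    · refine Or.inl ⟨fun i => if i = a then 0 else lam i, fun i => ?_, ?_⟩
      · by_cases h : i = a <;> simp [h, hl i]
      · rw [Finset.sum_insert ha]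
        have h0 : ∑ i ∈ s, (fun i => if i = a then 0 else lam i) i • v i
            = ∑ i ∈ s, lam i • v i := by
          refine Finset.sum_congr rfl fun i hi => ?_
          have hia : i ≠ a := fun h => ha (h ▸ hi)
          simp [hia]
        rw [h0, he]
        simp
    · set d := fdot (v a) y with hd_def
      by_cases hd : 0 ≤ d
      · refine Or.inr ⟨y, fun i hi => ?_, hby⟩
        rcases Finset.mem_insert.mp hi with rfl | hi
        · exact hd
        · exact hy i hi
      · push_neg at hd
        set α := fdot b y / d with hα_def
        have hα : 0 < α := div_pos_of_neg_of_neg hby hd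
        set v' := fun i => v i - (fdot (v i) y / d) • v a with hv'
        set b' := b - α • v a with hb'
        rcases ih v' b' with ⟨lam, hl, he⟩ | ⟨w, hw, hbw⟩
        · set μ := α - ∑ i ∈ s, lam i * (fdot (v i) y / d) with hμ_def
          have hμ : 0 ≤ μ := by
            have hs : ∑ i ∈ s, lam i * (fdot (v i) y / d) ≤ 0 := by
              refine Finset.sum_nonpos fun i hi => ?_
              exact mul_nonpos_of_nonneg_of_nonpos (hl i)
                (div_nonpos_of_nonneg_of_nonpos (hy i hi) hd.le)
            rw [hμ_def]; linarith
          refine Or.inl ⟨fun i => if i = a then μ else lam i, fun i => ?_, ?_⟩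
          · by_cases h : i = a <;> simp [h, hμ, hl i]
          · funext r
            have he' := congrFun he r
            simp only [hb', hv', Finset.sum_apply, Pi.smul_apply, Pi.sub_apply,
              smul_eq_mul] at he'
            have hsum : ∀ i ∈ s, lam i * (v i r - fdot (v i) y / d * v a r) =
                lam i * v i r - lam i * (fdot (v i) y / d) * v a r := by intro i _; ring
            rw [Finset.sum_congr rfl hsum, Finset.sum_sub_distrib, ← Finset.sum_mul] at he'
            rw [Finset.sum_apply, Finset.sum_insert ha]
            simp only [Pi.smul_apply, smul_eq_mul, eq_self_iff_true, if_true]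
            have h0 : ∑ i ∈ s, (if i = a then μ else lam i) * v i r
                = ∑ i ∈ s, lam i * v i r := by
              refine Finset.sum_congr rfl fun i hi => ?_
              have hia : i ≠ a := fun h => ha (h ▸ hi)
              simp [hia]
            rw [h0]
            have hμr : μ * v a r =
                α * v a r - (∑ i ∈ s, lam i * (fdot (v i) y / d)) * v a r := by
              rw [hμ_def]; ring
            rw [hμr]
            linarith
        · refine Or.inr ⟨w - (fdot (v a) w / d) • y, fun i hi => ?_, ?_⟩
          · rcases Finset.mem_insert.mp hi with rfl | hi
            · rw [fdot_sub_smul_right, ← hd_def]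
              rw [div_mul_cancel₀ _ (ne_of_lt hd)]
              simp
            · have h1 := hw i hi
              rw [hv'] at h1
              simp only at h1
              rw [fdot_sub_smul_left] at h1
              rw [fdot_sub_smul_right]
              have hc : fdot (v a) w / d * fdot (v i) y = fdot (v i) y / d * fdot (v a) w := by
                ring
              linarith [hc]
          · have h1 := hbw
            rw [hb'] at h1
            rw [fdot_sub_smul_left] at h1
            rw [fdot_sub_smul_right]
            have hc : fdot (v a) w / d * fdot b y = α * fdot (v a) w := by
              rw [hα_def]; ring
            linarith

end Farkas

lemma sum_mul_sum_comm {ι κ : Type} [Fintype ι] [Fintype κ] (u : ι → ℝ) (c : κ → ℝ)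
    (X : κ → ι → ℝ) :
    ∑ i, u i * ∑ a, c a * X a i = ∑ a, c a * ∑ i, u i * X a i := by
  simp only [Finset.mul_sum]
  rw [Finset.sum_comm]
  exact Finset.sum_congr rfl fun a _ => Finset.sum_congr rfl fun i _ => by ring

namespace MDP

variable {S A : Type} [Fintype S] [Fintype A] [DecidableEq S]

lemma dual_bound (M : MDP S A) {F : Finset S}
    (habs : ∀ s ∈ F, ∀ a, M.enabled s a → M.prob s a s = 1)
    {k : ℕ} {G : Fin k → Finset S} (hG : ∀ i, G i ⊆ F)
    (σ : Scheduler M) (z : S → ℝ) (u : Fin k → ℝ)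
    (hz : ∀ s, 0 ≤ z s) (hu : ∀ i, 0 ≤ u i)
    (hdual : ∀ p : S × A, p.1 ∉ F → M.enabled p.1 p.2 →
      ∑ i, u i * (∑ t ∈ G i, M.prob p.1 p.2 t) + ∑ t, M.prob p.1 p.2 t * z t ≤ z p.1) :
    ∀ n h s, s ∉ F → ∑ i, u i * reachAux M σ (G i) n h s ≤ z s := by
  intro n
  induction n with
  | zero =>
    intro h s hs
    have : ∀ i, reachAux M σ (G i) 0 h s = 0 := by
      intro i
      have : s ∉ G i := fun hc => hs (hG i hc)
      simp [reachAux, this]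
    simp [this]
    exact hz s
  | succ n ih =>
    intro h s hs
    have key : ∀ a, M.enabled s a →
        ∑ i, u i * ∑ t, M.prob s a t * reachAux M σ (G i) n (h ++ [(s, a)]) t ≤ z s := by
      intro a ha
      rw [sum_mul_sum_comm u (fun t => M.prob s a t)
        (fun t i => reachAux M σ (G i) n (h ++ [(s, a)]) t)]
      have hbnd : ∀ t, ∑ i, u i * reachAux M σ (G i) n (h ++ [(s, a)]) t ≤
          (if t ∈ F then 0 else z t) + ∑ i, u i * (if t ∈ G i then 1 else 0) := by
        intro t
        by_cases ht : t ∈ F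
        · have : ∀ i, reachAux M σ (G i) n (h ++ [(s, a)]) t = if t ∈ G i then 1 else 0 := by
            intro i
            by_cases htG : t ∈ G i
            · simp [reachAux_mem M σ (G i) n _ htG, htG]
            · simp [reachAux_absorbing M σ habs ht htG n _, htG]
          simp only [this, ht, if_pos, if_true]
          simp
        · simp only [ht, if_false]
          have h1 : ∑ i, u i * reachAux M σ (G i) n (h ++ [(s, a)]) t ≤ z t := ih _ t ht
          have h2 : 0 ≤ ∑ i, u i * (if t ∈ G i then 1 else 0) :=
            Finset.sum_nonneg fun i _ => mul_nonneg (hu i) (by split <;> norm_num)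
          linarith
      calc ∑ t, M.prob s a t * ∑ i, u i * reachAux M σ (G i) n (h ++ [(s, a)]) t
          ≤ ∑ t, M.prob s a t *
            ((if t ∈ F then 0 else z t) + ∑ i, u i * (if t ∈ G i then 1 else 0)) :=
            Finset.sum_le_sum fun t _ =>
              mul_le_mul_of_nonneg_left (hbnd t) (M.prob_nonneg s a t)
        _ = ∑ t, M.prob s a t * (if t ∈ F then 0 else z t) +
            ∑ i, u i * ∑ t, M.prob s a t * (if t ∈ G i then 1 else 0) := by
            rw [sum_mul_sum_comm u (fun t => M.prob s a t)
              (fun t i => if t ∈ G i then 1 else 0)]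
            rw [← Finset.sum_add_distrib]
            exact Finset.sum_congr rfl fun t _ => by ring
        _ ≤ ∑ t, M.prob s a t * z t + ∑ i, u i * ∑ t ∈ G i, M.prob s a t := by
            refine add_le_add (Finset.sum_le_sum fun t _ => ?_) (le_of_eq ?_)
            · by_cases ht : t ∈ F
              · simp only [ht, if_true, mul_zero]
                exact mul_nonneg (M.prob_nonneg s a t) (hz t)
              · simp [ht]
            · refine Finset.sum_congr rfl fun i _ => ?_
              congr 1
              simp [mul_ite, Finset.sum_ite_mem]
        _ ≤ z s := by
            have := hdual (s, a) hs ha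
            simp only at this
            linarith
    have hrw : ∑ i, u i * reachAux M σ (G i) (n + 1) h s =
        ∑ a, σ.choice h s a *
          ∑ i, u i * ∑ t, M.prob s a t * reachAux M σ (G i) n (h ++ [(s, a)]) t := by
      have : ∀ i, reachAux M σ (G i) (n + 1) h s =
          ∑ a, σ.choice h s a * ∑ t, M.prob s a t * reachAux M σ (G i) n (h ++ [(s, a)]) t := by
        intro i
        have hsG : s ∉ G i := fun hc => hs (hG i hc)
        simp [reachAux, hsG]
      simp only [this]
      rw [sum_mul_sum_comm u (fun a => σ.choice h s a)
        (fun a i => ∑ t, M.prob s a t * reachAux M σ (G i) n (h ++ [(s, a)]) t)]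
    rw [hrw]
    calc ∑ a, σ.choice h s a *
          ∑ i, u i * ∑ t, M.prob s a t * reachAux M σ (G i) n (h ++ [(s, a)]) t
        ≤ ∑ a, σ.choice h s a * z s := by
          refine Finset.sum_le_sum fun a _ => ?_
          by_cases ha : σ.choice h s a = 0
          · simp [ha]
          · exact mul_le_mul_of_nonneg_left (key a (σ.choice_support h s a ha))
              (σ.choice_nonneg h s a)
      _ = z s := by rw [← Finset.sum_mul, σ.choice_sum_one h s, one_mul]

end MDP

namespace MDP

variable {S A : Type} [Fintype S] [Fintype A] [DecidableEq S]

lemma cert_sound (M : MDP S A) {F : Finset S}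
    (habs : ∀ s ∈ F, ∀ a, M.enabled s a → M.prob s a s = 1)
    (hinit : M.init ∉ F)
    {k : ℕ} {G : Fin k → Finset S} (hG : ∀ i, G i ⊆ F) (lam : Fin k → ℝ)
    (y : S × A → ℝ) (hy0 : ∀ p, 0 ≤ y p)
    (hsupp : ∀ p : S × A, p.1 ∈ F ∨ ¬ M.enabled p.1 p.2 → y p = 0)
    (hflow : ∀ s, s ∉ F →
      ∑ p : S × A, ((if p.1 = s then (1 : ℝ) else 0) - M.prob p.1 p.2 s) * y p
        ≤ (if s = M.init then 1 else 0))
    (hT : ∀ i, lam i ≤ ∑ p : S × A, (∑ t ∈ G i, M.prob p.1 p.2 t) * y p) :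
    ∃ σ : Scheduler M, ∀ i, lam i ≤ prReach M σ (G i) := by
  classical
  set Y : S → ℝ := fun s => ∑ a, y (s, a) with hYdef
  have hY0 : ∀ s, 0 ≤ Y s := fun s => Finset.sum_nonneg fun a _ => hy0 (s, a)
  have hzero : ∀ s, Y s = 0 → ∀ a, y (s, a) = 0 := by
    intro s hs a
    exact (Finset.sum_eq_zero_iff_of_nonneg (fun a _ => hy0 (s, a))).mp hs a (Finset.mem_univ a)
  have hYF : ∀ s ∈ F, Y s = 0 := fun s hs =>
    Finset.sum_eq_zero fun a _ => hsupp (s, a) (Or.inl hs)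
  -- the memoryless scheduler induced by `y`
  obtain ⟨σ, hσc⟩ : ∃ σ : Scheduler M, ∀ h s a, σ.choice h s a =
      (if _ : 0 < Y s then y (s, a) / Y s
       else if a = Classical.choose (M.exists_enabled s) then 1 else 0) := by
    refine ⟨⟨fun _ s a => if _ : 0 < Y s then y (s, a) / Y s
      else if a = Classical.choose (M.exists_enabled s) then 1 else 0, ?_, ?_, ?_⟩,
      fun _ _ _ => rfl⟩
    · intro h s a
      by_cases hY : 0 < Y s
      · simp only [dif_pos hY]
        exact div_nonneg (hy0 (s, a)) (hY0 s)
      · simp only [dif_neg hY]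
        split <;> norm_num
    · intro h s
      by_cases hY : 0 < Y s
      · simp only [dif_pos hY]
        rw [← Finset.sum_div]
        exact div_self (ne_of_gt hY)
      · simp only [dif_neg hY]
        simp
    · intro h s a ha
      by_cases hY : 0 < Y s
      · simp only [dif_pos hY] at ha
        have hya : y (s, a) ≠ 0 := fun hc => ha (by rw [hc]; simp)
        by_contra hen
        exact hya (hsupp (s, a) (Or.inr hen))
      · simp only [dif_neg hY] at ha
        have hax : a = Classical.choose (M.exists_enabled s) := by
          by_contra hc
          simp [hc] at ha
        rw [hax]
        exact Classical.choose_spec (M.exists_enabled s)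
  have hmem : ∀ h h' s a, σ.choice h s a = σ.choice h' s a := by
    intro h h' s a; rw [hσc, hσc]
  refine ⟨σ, fun i => ?_⟩
  set V : S → ℝ := fun s => prReachFrom M σ (G i) s with hVdef
  have hVnn : ∀ s, 0 ≤ V s := fun s => prReachFrom_nonneg M σ (G i) s
  have hVmem : ∀ t ∈ G i, V t = 1 := fun t ht => prReachFrom_mem M σ ht
  have hVF : ∀ t ∈ F, t ∉ G i → V t = 0 := fun t ht htG =>
    prReachFrom_absorbing M σ habs ht htG
  -- Claim A : per-state identity
  have claimA : ∀ s, ∑ a, y (s, a) * ∑ t, M.prob s a t * V t = Y s * V s := by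
    intro s
    by_cases hYs : 0 < Y s
    · have hsF : s ∉ F := by
        intro hc
        rw [hYF s hc] at hYs
        exact lt_irrefl 0 hYs
      have hsG : s ∉ G i := fun hc => hsF (hG i hc)
      have hfix := prReachFrom_fix M σ hmem (G i) hsG
      have hc : ∀ a, σ.choice [] s a = y (s, a) / Y s := by
        intro a; rw [hσc]; exact dif_pos hYs
      simp only [hc] at hfix
      have hYne : Y s ≠ 0 := ne_of_gt hYs
      calc ∑ a, y (s, a) * ∑ t, M.prob s a t * V t
          = Y s * ∑ a, y (s, a) / Y s * ∑ t, M.prob s a t * V t := by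
            rw [Finset.mul_sum]
            refine Finset.sum_congr rfl fun a _ => ?_
            field_simp
        _ = Y s * V s := by rw [← hfix]
    · have hY : Y s = 0 := le_antisymm (not_lt.mp hYs) (hY0 s)
      have := hzero s hY
      simp [this, hY]
  -- pointwise split of the transition sum
  have hsplit : ∀ p : S × A, ∑ t, M.prob p.1 p.2 t * V t =
      (∑ t ∈ G i, M.prob p.1 p.2 t) + ∑ t, (if t ∈ F then 0 else M.prob p.1 p.2 t * V t) := by
    intro p
    have hpt : ∀ t, M.prob p.1 p.2 t * V t =
        (if t ∈ G i then M.prob p.1 p.2 t else 0) +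
        (if t ∈ F then 0 else M.prob p.1 p.2 t * V t) := by
      intro t
      by_cases htG : t ∈ G i
      · have htF : t ∈ F := hG i htG
        simp [htG, htF, hVmem t htG]
      · by_cases htF : t ∈ F
        · simp [htG, htF, hVF t htF htG]
        · simp [htG, htF]
    rw [Finset.sum_congr rfl fun t _ => hpt t, Finset.sum_add_distrib]
    congr 1
    simp [Finset.sum_ite_mem]
  -- δ-sum identity
  have hdelta : ∀ t, ∑ p : S × A, (if p.1 = t then (1 : ℝ) else 0) * y p = Y t := by
    intro t
    rw [Fintype.sum_prod_type]
    have h1 : ∀ s, ∑ a, (if s = t then (1 : ℝ) else 0) * y (s, a)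
        = if s = t then Y s else 0 := by
      intro s
      by_cases h : s = t <;> simp [h, hYdef]
    rw [Finset.sum_congr rfl fun s _ => h1 s]
    simp
  -- flow inequality in inflow form
  have hinflow : ∀ t, t ∉ F →
      Y t - (if t = M.init then 1 else 0) ≤ ∑ p : S × A, M.prob p.1 p.2 t * y p := by
    intro t ht
    have h := hflow t ht
    have hexp : ∑ p : S × A, ((if p.1 = t then (1 : ℝ) else 0) - M.prob p.1 p.2 t) * y p
        = Y t - ∑ p : S × A, M.prob p.1 p.2 t * y p := by
      rw [← hdelta t, ← Finset.sum_sub_distrib]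
      exact Finset.sum_congr rfl fun p _ => by ring
    rw [hexp] at h
    linarith
  -- E1
  have E1 : ∑ p : S × A, y p * ∑ t, M.prob p.1 p.2 t * V t = ∑ s, Y s * V s := by
    rw [Fintype.sum_prod_type]
    exact Finset.sum_congr rfl fun s _ => claimA s
  -- E2
  have E2 : ∑ p : S × A, y p * ∑ t, M.prob p.1 p.2 t * V t =
      ∑ p : S × A, y p * (∑ t ∈ G i, M.prob p.1 p.2 t) +
      ∑ p : S × A, y p * ∑ t, (if t ∈ F then 0 else M.prob p.1 p.2 t * V t) := by
    rw [← Finset.sum_add_distrib]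
    refine Finset.sum_congr rfl fun p _ => ?_
    rw [hsplit p, mul_add]
  -- E3
  have E3 : ∑ s, Y s * V s - V M.init ≤
      ∑ p : S × A, y p * ∑ t, (if t ∈ F then 0 else M.prob p.1 p.2 t * V t) := by
    have hswap : ∑ p : S × A, y p * ∑ t, (if t ∈ F then 0 else M.prob p.1 p.2 t * V t) =
        ∑ t, (if t ∈ F then 0 else V t * ∑ p : S × A, M.prob p.1 p.2 t * y p) := by
      simp only [Finset.mul_sum]
      rw [Finset.sum_comm]
      refine Finset.sum_congr rfl fun t _ => ?_
      by_cases ht : t ∈ F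
      · simp [ht]
      · simp only [ht, if_false, Finset.mul_sum]
        exact Finset.sum_congr rfl fun p _ => by ring
    rw [hswap]
    have hterm : ∀ t, (if t ∈ F then 0 else V t * Y t - V t * (if t = M.init then 1 else 0)) ≤
        (if t ∈ F then 0 else V t * ∑ p : S × A, M.prob p.1 p.2 t * y p) := by
      intro t
      by_cases ht : t ∈ F
      · simp [ht]
      · simp only [ht, if_false]
        have h1 := hinflow t ht
        have h2 := mul_le_mul_of_nonneg_left h1 (hVnn t)
        calc V t * Y t - V t * (if t = M.init then 1 else 0)
            = V t * (Y t - (if t = M.init then 1 else 0)) := by ring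
          _ ≤ V t * ∑ p : S × A, M.prob p.1 p.2 t * y p := h2
    have hsum := Finset.sum_le_sum fun t (_ : t ∈ Finset.univ) => hterm t
    have hlhs : ∑ t, (if t ∈ F then 0 else V t * Y t - V t * (if t = M.init then 1 else 0)) =
        ∑ s, Y s * V s - V M.init := by
      have hps : ∀ t, (if t ∈ F then 0 else V t * Y t - V t * (if t = M.init then 1 else 0)) =
          Y t * V t - (if t = M.init then V t else 0) := by
        intro t
        by_cases ht : t ∈ F
        · have hY : Y t = 0 := hYF t ht
          have hne : t ≠ M.init := fun hc => hinit (hc ▸ ht)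
          rw [if_pos ht, if_neg hne, hY]
          ring
        · by_cases hti : t = M.init
          · rw [if_neg ht, if_pos hti, if_pos hti]
            ring
          · rw [if_neg ht, if_neg hti, if_neg hti]
            ring
      rw [Finset.sum_congr rfl fun t _ => hps t, Finset.sum_sub_distrib]
      congr 1
      simp
    rw [hlhs] at hsum
    exact hsum
  have hfinal : ∑ p : S × A, y p * (∑ t ∈ G i, M.prob p.1 p.2 t) ≤ V M.init := by
    have := E1
    rw [E2] at this
    linarith
  have hpr : prReach M σ (G i) = V M.init := rfl
  rw [hpr]
  calc lam i ≤ ∑ p : S × A, (∑ t ∈ G i, M.prob p.1 p.2 t) * y p := hT i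
    _ = ∑ p : S × A, y p * (∑ t ∈ G i, M.prob p.1 p.2 t) :=
        Finset.sum_congr rfl fun p _ => by ring
    _ ≤ V M.init := hfinal

end MDP


/-- Farkas certificates for existentially quantified conjunctive reachability queries
(inequality form): `∃σ. ⋀ᵢ Pr^σ(◇Gᵢ) ≥ λᵢ` iff `∃ y ≥ 0` supported on the enabled
non-target pairs `E` with `Aᵀ y ≤ δ_in` and `Tᵀ y ≥ λ`. -/
theorem exists_conj_reach_certificates {S A : Type} [Fintype S] [Fintype A] [DecidableEq S]
    (M : MDP S A) (F : Finset S)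
    (habs : ∀ s ∈ F, ∀ a, M.enabled s a → M.prob s a s = 1)
    (hform : ∀ s, ∃ σ : MDP.Scheduler M, 0 < MDP.prReachFrom M σ F s)
    (hinit : M.init ∉ F)
    {k : ℕ} (G : Fin k → Finset S) (hG : ∀ i, G i ⊆ F) (lam : Fin k → ℝ) :
    (∃ σ : MDP.Scheduler M, ∀ i, lam i ≤ MDP.prReach M σ (G i)) ↔
      ∃ y : S × A → ℝ,
        (∀ p, 0 ≤ y p) ∧
        (∀ p : S × A, p.1 ∈ F ∨ ¬ M.enabled p.1 p.2 → y p = 0) ∧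
        (∀ s, s ∉ F →
          ∑ p : S × A, ((if p.1 = s then (1 : ℝ) else 0) - M.prob p.1 p.2 s) * y p
            ≤ (if s = M.init then 1 else 0)) ∧
        (∀ i, lam i ≤ ∑ p : S × A, (∑ t ∈ G i, M.prob p.1 p.2 t) * y p) := by
  classical
  constructor
  · rintro ⟨σ, hσ⟩
    -- Farkas setup
    set col : S × A → (S ⊕ Fin k) → ℝ := fun p =>
      Sum.elim (fun s => (if p.1 = s then (1 : ℝ) else 0) - M.prob p.1 p.2 s)
        (fun i => -(∑ t ∈ G i, M.prob p.1 p.2 t)) with hcol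
    set v : (S × A) ⊕ (S ⊕ Fin k) → (S ⊕ Fin k) → ℝ :=
      Sum.elim (fun p => if p.1 ∉ F ∧ M.enabled p.1 p.2 then col p else 0)
        (fun r r' => if r' = r then 1 else 0) with hv
    set b : (S ⊕ Fin k) → ℝ :=
      Sum.elim (fun s => if s = M.init then (1 : ℝ) else 0) (fun i => -lam i) with hb
    rcases farkas Finset.univ v b with ⟨lamv, hl, he⟩ | ⟨w, hw, hbw⟩
    · -- extract certificate
      set y : S × A → ℝ := fun p =>
        if p.1 ∉ F ∧ M.enabled p.1 p.2 then lamv (Sum.inl p) else 0 with hy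
      have hy0 : ∀ p, 0 ≤ y p := by
        intro p
        by_cases hc : p.1 ∉ F ∧ M.enabled p.1 p.2
        · simp only [hy]
          rw [if_pos hc]
          exact hl (Sum.inl p)
        · simp only [hy]
          rw [if_neg hc]
      have hcoord : ∀ r, (∑ p : S × A, y p * col p r) + lamv (Sum.inr r) = b r := by
        intro r
        have h := congrFun he r
        rw [Finset.sum_apply] at h
        simp only [Pi.smul_apply, smul_eq_mul] at h
        rw [Fintype.sum_sum_type] at h
        have h2 : ∑ q : S ⊕ Fin k, lamv (Sum.inr q) * v (Sum.inr q) r = lamv (Sum.inr r) := by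
          simp only [hv, Sum.elim_inr, mul_ite, mul_one, mul_zero]
          simp [Finset.sum_ite_eq]
        have h1 : ∑ p : S × A, lamv (Sum.inl p) * v (Sum.inl p) r
            = ∑ p : S × A, y p * col p r := by
          refine Finset.sum_congr rfl fun p _ => ?_
          simp only [hv, Sum.elim_inl, hy]
          by_cases hc : p.1 ∉ F ∧ M.enabled p.1 p.2
          · simp [hc]
          · simp [hc]
        rw [h1, h2] at h
        exact h
      refine ⟨y, hy0, ?_, ?_, ?_⟩
      · intro p hp
        simp only [hy]
        rw [if_neg]
        intro ⟨h1, h2⟩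
        rcases hp with hp | hp
        · exact h1 hp
        · exact hp h2
      · intro s hs
        have h := hcoord (Sum.inl s)
        simp only [hcol, hb, Sum.elim_inl] at h
        have hsl : 0 ≤ lamv (Sum.inr (Sum.inl s)) := hl _
        have hcomm : ∑ p : S × A, ((if p.1 = s then (1 : ℝ) else 0) - M.prob p.1 p.2 s) * y p
            = ∑ p : S × A, y p * ((if p.1 = s then (1 : ℝ) else 0) - M.prob p.1 p.2 s) :=
          Finset.sum_congr rfl fun p _ => by ring
        rw [hcomm]
        linarith
      · intro i
        have h := hcoord (Sum.inr i)
        simp only [hcol, hb, Sum.elim_inr] at h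
        have hsl : 0 ≤ lamv (Sum.inr (Sum.inr i)) := hl _
        have hexp : ∑ p : S × A, y p * -(∑ t ∈ G i, M.prob p.1 p.2 t)
            = -∑ p : S × A, (∑ t ∈ G i, M.prob p.1 p.2 t) * y p := by
          rw [← Finset.sum_neg_distrib]
          exact Finset.sum_congr rfl fun p _ => by ring
        rw [hexp] at h
        linarith
    · -- dual certificate contradicts the scheduler
      exfalso
      set z : S → ℝ := fun s => w (Sum.inl s) with hz
      set u : Fin k → ℝ := fun i => w (Sum.inr i) with hu
      have hwnn : ∀ r, 0 ≤ w r := by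
        intro r
        have h := hw (Sum.inr r) (Finset.mem_univ _)
        simp only [hv, Sum.elim_inr, fdot] at h
        simpa [mul_comm] using h
      have hznn : ∀ s, 0 ≤ z s := fun s => hwnn (Sum.inl s)
      have hunn : ∀ i, 0 ≤ u i := fun i => hwnn (Sum.inr i)
      have hdual : ∀ p : S × A, p.1 ∉ F → M.enabled p.1 p.2 →
          ∑ i, u i * (∑ t ∈ G i, M.prob p.1 p.2 t) + ∑ t, M.prob p.1 p.2 t * z t ≤ z p.1 := by
        intro p hpF hpe
        have h := hw (Sum.inl p) (Finset.mem_univ _)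
        simp only [hv, Sum.elim_inl, if_pos (And.intro hpF hpe), fdot] at h
        rw [Fintype.sum_sum_type] at h
        have hA : ∑ s, col p (Sum.inl s) * w (Sum.inl s)
            = z p.1 - ∑ t, M.prob p.1 p.2 t * z t := by
          simp only [hcol, Sum.elim_inl]
          have : ∀ s, ((if p.1 = s then (1 : ℝ) else 0) - M.prob p.1 p.2 s) * w (Sum.inl s)
              = (if p.1 = s then z s else 0) - M.prob p.1 p.2 s * z s := by
            intro s
            simp only [hz]
            by_cases hps : p.1 = s
            · rw [if_pos hps, if_pos hps]; ring
            · rw [if_neg hps, if_neg hps]; ring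
          rw [Finset.sum_congr rfl fun s _ => this s, Finset.sum_sub_distrib]
          congr 1
          simp [Finset.sum_ite_eq]
        have hB : ∑ i, col p (Sum.inr i) * w (Sum.inr i)
            = -∑ i, u i * (∑ t ∈ G i, M.prob p.1 p.2 t) := by
          simp only [hcol, Sum.elim_inr]
          rw [← Finset.sum_neg_distrib]
          exact Finset.sum_congr rfl fun i _ => by rw [hu]; ring
        rw [hA, hB] at h
        linarith
      have hkey := MDP.dual_bound M habs hG σ z u hznn hunn hdual
      have hlim : Filter.Tendsto (fun n => ∑ i, u i * MDP.reachAux M σ (G i) n [] M.init)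
          Filter.atTop (nhds (∑ i, u i * MDP.prReach M σ (G i))) := by
        refine tendsto_finset_sum _ fun i _ => Filter.Tendsto.const_mul _ ?_
        exact MDP.tendsto_reachAux M σ (G i) M.init
      have h1 : ∑ i, u i * MDP.prReach M σ (G i) ≤ z M.init :=
        le_of_tendsto' hlim fun n => hkey n [] M.init hinit
      have h2 : ∑ i, lam i * u i ≤ ∑ i, u i * MDP.prReach M σ (G i) := by
        refine Finset.sum_le_sum fun i _ => ?_
        calc lam i * u i = u i * lam i := by ring
          _ ≤ u i * MDP.prReach M σ (G i) := mul_le_mul_of_nonneg_left (hσ i) (hunn i)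
      have h3 : fdot b w = z M.init - ∑ i, lam i * u i := by
        simp only [fdot, hb]
        rw [Fintype.sum_sum_type]
        have hA : ∑ s, Sum.elim (fun s => if s = M.init then (1 : ℝ) else 0)
            (fun i => -lam i) (Sum.inl s) * w (Sum.inl s) = z M.init := by
          simp only [Sum.elim_inl, ite_mul, one_mul, zero_mul]
          simp [Finset.sum_ite_eq, hz]
        have hB : ∑ i, Sum.elim (fun s => if s = M.init then (1 : ℝ) else 0)
            (fun i => -lam i) (Sum.inr i) * w (Sum.inr i) = -∑ i, lam i * u i := by
          simp only [Sum.elim_inr]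
          rw [← Finset.sum_neg_distrib]
          exact Finset.sum_congr rfl fun i _ => by rw [hu]; ring
        rw [hA, hB]
        ring
      rw [h3] at hbw
      linarith
  · rintro ⟨y, hy0, hsupp, hflow, hT⟩
    exact MDP.cert_sound M habs hinit hG lam y hy0 hsupp hflow hT
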